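/- Let k be a field of characteristic p > 0, let m > 0, set q = p^m, let f be an m-truncated group law over k, let R be a commutative k-algebra, and let ∂ = (∂_n)_{0 ≤ n < q} be an f-iterative m-truncated HS-derivation on R. If r ∈ R satisfies ∂_{p^j}(r) = 0 for every j < m, then ∂_n(r) = 0 for every n with 1 ≤ n < q. -/

import Mathlib

open Finset MvPolynomial

/-- `f ∈ k[X,Y]` is an `m`-truncated group law over `k` (for the prime `p`):
all monomials of `f` have both exponents `< p ^ m`, `f(X,0) = X`, `f(0,Y) = Y`, and
`f(f(X,Y),Z) ≡ f(X,f(Y,Z))` modulo the ideal `(X^{p^m}, Y^{p^m}, Z^{p^m})`. -/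
def IsTruncGroupLaw (p m : ℕ) {k : Type*} [Field k] (f : MvPolynomial (Fin 2) k) : Prop :=
  (∀ d ∈ f.support, d 0 < p ^ m ∧ d 1 < p ^ m) ∧
  (MvPolynomial.aeval ![(Polynomial.X : Polynomial k), 0] f = Polynomial.X) ∧
  (MvPolynomial.aeval ![0, (Polynomial.X : Polynomial k)] f = Polynomial.X) ∧
  (MvPolynomial.aeval
      ![MvPolynomial.aeval ![(MvPolynomial.X 0 : MvPolynomial (Fin 3) k), MvPolynomial.X 1] f,
        MvPolynomial.X 2] f -
    MvPolynomial.aeval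
      ![(MvPolynomial.X 0 : MvPolynomial (Fin 3) k),
        MvPolynomial.aeval ![(MvPolynomial.X 1 : MvPolynomial (Fin 3) k), MvPolynomial.X 2] f] f
    ∈ Ideal.span {(MvPolynomial.X 0 : MvPolynomial (Fin 3) k) ^ p ^ m,
        MvPolynomial.X 1 ^ p ^ m, MvPolynomial.X 2 ^ p ^ m})

/-- `D` is an `m`-truncated HS-derivation on `R` (for the prime `p`):
only the maps `D n` for `n < p ^ m` are relevant. -/
def IsTruncHSDeriv (p m : ℕ) {R : Type*} [CommRing R] (D : ℕ → R → R) : Prop :=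
  (∀ n, n < p ^ m → ∀ x y, D n (x + y) = D n x + D n y) ∧
  (∀ x, D 0 x = x) ∧
  (∀ n, n < p ^ m → ∀ x y, D n (x * y) = ∑ ij ∈ Finset.HasAntidiagonal.antidiagonal n, D ij.1 x * D ij.2 y)

/-- `D` is an `f`-iterative `m`-truncated HS-derivation (an `f`-derivation):
`D j ∘ D i = Σ_{n < p^m} c_{i,j,n} • D n` where `c_{i,j,n}` is the coefficient of
`X^i Y^j` in `f ^ n`. -/
def IsFIterativeTrunc (p m : ℕ) {k : Type*} [Field k] (f : MvPolynomial (Fin 2) k)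
    {R : Type*} [CommRing R] [Algebra k R] (D : ℕ → R → R) : Prop :=
  ∀ i j : ℕ, i < p ^ m → j < p ^ m → ∀ r,
    D j (D i r) = ∑ n ∈ Finset.range (p ^ m),
      MvPolynomial.coeff (Finsupp.single (0 : Fin 2) i + Finsupp.single (1 : Fin 2) j) (f ^ n)
        • D n r

/-! ### Auxiliary lemmas -/

section AuxLow
variable {k : Type*} [Field k]

/-- All monomials of `h` have total degree at least `c`. -/
def MyLow (c : ℕ) (h : MvPolynomial (Fin 2) k) : Prop :=
  ∀ d : Fin 2 →₀ ℕ, d 0 + d 1 < c → MvPolynomial.coeff d h = 0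

lemma myLow_mul {h₁ h₂ : MvPolynomial (Fin 2) k} {c₁ c₂ : ℕ}
    (H₁ : MyLow c₁ h₁) (H₂ : MyLow c₂ h₂) : MyLow (c₁ + c₂) (h₁ * h₂) := by
  intro d hd
  rw [MvPolynomial.coeff_mul]
  apply Finset.sum_eq_zero
  intro x hx
  have hxd : x.1 + x.2 = d := Finset.HasAntidiagonal.mem_antidiagonal.mp hx
  have h0 : x.1 0 + x.2 0 = d 0 := by rw [← hxd]; simp
  have h1 : x.1 1 + x.2 1 = d 1 := by rw [← hxd]; simp
  rcases lt_or_ge (x.1 0 + x.1 1) c₁ with h | h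
  · rw [H₁ _ h, zero_mul]
  · rw [H₂ _ (by omega), mul_zero]

lemma myLow_pow {h : MvPolynomial (Fin 2) k} {c : ℕ}
    (H : MyLow c h) : ∀ n, MyLow (c * n) (h ^ n) := by
  intro n
  induction n with
  | zero => intro d hd; omega
  | succ n ih =>
      rw [pow_succ, Nat.mul_succ]
      exact myLow_mul ih H

lemma coeff_aeval_X_zero (f : MvPolynomial (Fin 2) k) (a : ℕ) :
    (MvPolynomial.aeval ![(Polynomial.X : Polynomial k), 0] f).coeff a
      = MvPolynomial.coeff (Finsupp.single 0 a) f := by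
  conv_lhs => rw [f.as_sum]
  rw [map_sum, Polynomial.finset_sum_coeff]
  rw [Finset.sum_congr rfl (g := fun d => if d = Finsupp.single 0 a then
      MvPolynomial.coeff (Finsupp.single 0 a) f else 0)]
  · rw [Finset.sum_ite_eq' f.support (Finsupp.single 0 a)]
    split_ifs with h
    · rfl
    · exact (MvPolynomial.notMem_support_iff.mp h).symm
  · intro d _
    rw [aeval_monomial, Finsupp.prod_fintype _ _ (fun i => pow_zero _), Fin.prod_univ_two]
    simp only [Matrix.cons_val_zero, Matrix.cons_val_one, Matrix.head_cons]
    by_cases h1 : d 1 = 0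
    · have hda : (d = Finsupp.single 0 a) ↔ d 0 = a := by
        constructor
        · intro h; rw [h]; simp
        · intro h; ext x; fin_cases x <;> simp [h, h1, Finsupp.single_apply]
      have hC : (algebraMap k (Polynomial k)) (MvPolynomial.coeff d f)
          = Polynomial.C (MvPolynomial.coeff d f) := rfl
      rw [h1, pow_zero, mul_one, hC, Polynomial.coeff_C_mul, Polynomial.coeff_X_pow]
      by_cases h : d 0 = a
      · have hd' : d = Finsupp.single 0 a := hda.mpr h
        subst hd'
        simp [h]
      · rw [if_neg (fun hc : a = d 0 => h hc.symm), mul_zero,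
          if_neg (fun hc => h (hda.mp hc))]
    · simp only [zero_pow h1, mul_zero]
      rw [Polynomial.coeff_zero, if_neg]
      intro hc
      apply h1
      rw [hc]
      simp [Finsupp.single_apply]

lemma coeff_aeval_zero_X (f : MvPolynomial (Fin 2) k) (a : ℕ) :
    (MvPolynomial.aeval ![0, (Polynomial.X : Polynomial k)] f).coeff a
      = MvPolynomial.coeff (Finsupp.single 1 a) f := by
  conv_lhs => rw [f.as_sum]
  rw [map_sum, Polynomial.finset_sum_coeff]
  rw [Finset.sum_congr rfl (g := fun d => if d = Finsupp.single 1 a then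
      MvPolynomial.coeff (Finsupp.single 1 a) f else 0)]
  · rw [Finset.sum_ite_eq' f.support (Finsupp.single 1 a)]
    split_ifs with h
    · rfl
    · exact (MvPolynomial.notMem_support_iff.mp h).symm
  · intro d _
    rw [aeval_monomial, Finsupp.prod_fintype _ _ (fun i => pow_zero _), Fin.prod_univ_two]
    simp only [Matrix.cons_val_zero, Matrix.cons_val_one, Matrix.head_cons]
    by_cases h0 : d 0 = 0
    · have hda : (d = Finsupp.single 1 a) ↔ d 1 = a := by
        constructor
        · intro h; rw [h]; simp
        · intro h; ext x; fin_cases x <;> simp [h, h0, Finsupp.single_apply]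
      have hC : (algebraMap k (Polynomial k)) (MvPolynomial.coeff d f)
          = Polynomial.C (MvPolynomial.coeff d f) := rfl
      rw [h0, pow_zero, one_mul, hC, Polynomial.coeff_C_mul, Polynomial.coeff_X_pow]
      by_cases h : d 1 = a
      · have hd' : d = Finsupp.single 1 a := hda.mpr h
        subst hd'
        simp [h]
      · rw [if_neg (fun hc : a = d 1 => h hc.symm), mul_zero,
          if_neg (fun hc => h (hda.mp hc))]
    · simp only [zero_pow h0, zero_mul, mul_zero]
      rw [Polynomial.coeff_zero, if_neg]
      intro hc
      apply h0
      rw [hc]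
      simp [Finsupp.single_apply]

/-- every Fin-2 exponent of total degree ≤ 1 is 0, e₀ or e₁ -/
lemma fin2_deg_le_one (d : Fin 2 →₀ ℕ) (hd : d 0 + d 1 < 2) :
    d = 0 ∨ d = Finsupp.single 0 1 ∨ d = Finsupp.single 1 1 := by
  rcases (by omega : d 0 = 0 ∨ d 0 = 1) with h0 | h0 <;>
  rcases (by omega : d 1 = 0 ∨ d 1 = 1) with h1 | h1
  · left; ext x; fin_cases x <;> simpa
  · right; right; ext x; fin_cases x <;> simp [h0, h1, Finsupp.single_apply]
  · right; left; ext x; fin_cases x <;> simp [h0, h1, Finsupp.single_apply]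
  · omega

lemma coeff_L_pow (n i j : ℕ) (hij : i + j = n) :
    MvPolynomial.coeff (Finsupp.single 0 i + Finsupp.single 1 j)
      ((X 0 + X 1 : MvPolynomial (Fin 2) k) ^ n) = (n.choose i : k) := by
  rw [add_pow, MvPolynomial.coeff_sum]
  rw [Finset.sum_eq_single_of_mem i (Finset.mem_range.mpr (by omega))]
  · have : (X 0 : MvPolynomial (Fin 2) k) ^ i * X 1 ^ (n - i)
        = monomial (Finsupp.single 0 i + Finsupp.single 1 (n - i)) 1 := by
      rw [X_pow_eq_monomial, X_pow_eq_monomial, monomial_mul, one_mul]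
    rw [this, show (↑(n.choose i) : MvPolynomial (Fin 2) k)
        = C ((n.choose i : k)) from (map_natCast (C : k →+* MvPolynomial (Fin 2) k) _).symm,
      mul_comm, coeff_C_mul, coeff_monomial, if_pos (by rw [show n - i = j by omega]), mul_one]
  · intro b hb hbn
    have : (X 0 : MvPolynomial (Fin 2) k) ^ b * X 1 ^ (n - b)
        = monomial (Finsupp.single 0 b + Finsupp.single 1 (n - b)) 1 := by
      rw [X_pow_eq_monomial, X_pow_eq_monomial, monomial_mul, one_mul]
    rw [this, show (↑(n.choose b) : MvPolynomial (Fin 2) k)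
        = C ((n.choose b : k)) from (map_natCast (C : k →+* MvPolynomial (Fin 2) k) _).symm,
      mul_comm, coeff_C_mul, coeff_monomial, if_neg, mul_zero]
    intro hc
    apply hbn
    have := congrArg (fun g : Fin 2 →₀ ℕ => g 0) hc
    simpa [Finsupp.single_apply] using this

lemma coeff_pow_choose (f : MvPolynomial (Fin 2) k)
    (h0 : MvPolynomial.coeff 0 f = 0)
    (h1 : MvPolynomial.coeff (Finsupp.single 0 1) f = 1)
    (h2 : MvPolynomial.coeff (Finsupp.single 1 1) f = 1)
    (n i j : ℕ) (hij : i + j = n) :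
    MvPolynomial.coeff (Finsupp.single 0 i + Finsupp.single 1 j) (f ^ n)
      = (n.choose i : k) := by
  set L : MvPolynomial (Fin 2) k := X 0 + X 1 with hL
  set g : MvPolynomial (Fin 2) k := f - L with hg
  have hLlow : MyLow 1 L := by
    intro d hd
    have : d = 0 := by ext x; fin_cases x <;> simp <;> omega
    subst this
    simp [hL, coeff_X']
  have hne1 : (Finsupp.single (1 : Fin 2) 1) ≠ Finsupp.single (0 : Fin 2) 1 := by
    intro h
    have := congrArg (fun g : Fin 2 →₀ ℕ => g 0) h
    simp [Finsupp.single_apply] at this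
  have hne0 : (Finsupp.single (0 : Fin 2) 1) ≠ Finsupp.single (1 : Fin 2) 1 := by
    intro h; exact hne1 h.symm
  have hglow : MyLow 2 g := by
    intro d hd
    rcases fin2_deg_le_one d hd with h | h | h <;> subst h <;>
      simp [hg, hL, coeff_X', h0, h1, h2, hne0, hne1, MvPolynomial.coeff_sub]
  have hfLg : f = L + g := by rw [hg]; ring
  rw [hfLg, add_pow, MvPolynomial.coeff_sum]
  rw [Finset.sum_eq_single_of_mem n (Finset.self_mem_range_succ n)]
  · rw [Nat.sub_self, pow_zero, mul_one, Nat.choose_self, Nat.cast_one, mul_one]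
    exact coeff_L_pow n i j hij
  · intro b hb hbn
    have hblt : b < n := by
      rw [Finset.mem_range] at hb; omega
    rw [show (↑(n.choose b) : MvPolynomial (Fin 2) k)
        = C ((n.choose b : k)) from (map_natCast (C : k →+* MvPolynomial (Fin 2) k) _).symm,
      mul_comm, coeff_C_mul]
    have hlow : MyLow (1 * b + 2 * (n - b)) (L ^ b * g ^ (n - b)) :=
      myLow_mul (myLow_pow hLlow b) (myLow_pow hglow (n - b))
    rw [hlow _ (by simp [Finsupp.single_apply]; omega), mul_zero]

end AuxLow

lemma my_not_dvd_choose (p : ℕ) (hp : p.Prime) :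
    ∀ t n : ℕ, p ^ t ∣ n → ¬ p ^ (t + 1) ∣ n → ¬ p ∣ n.choose (p ^ t) := by
  haveI : Fact p.Prime := ⟨hp⟩
  intro t
  induction t with
  | zero =>
      intro n _ h2
      simpa [Nat.choose_one_right] using h2
  | succ t ih =>
      intro n h1 h2
      have hpn : p ∣ n := dvd_trans (dvd_pow_self p (Nat.succ_ne_zero t)) h1
      have key := @Choose.choose_modEq_choose_mod_mul_choose_div_nat n (p ^ (t + 1)) p _
      have e1 : n % p = 0 := (Nat.mod_eq_zero_of_dvd hpn)
      have e2 : p ^ (t + 1) % p = 0 :=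
        Nat.mod_eq_zero_of_dvd (dvd_pow_self p (Nat.succ_ne_zero t))
      have e3 : p ^ (t + 1) / p = p ^ t := by
        rw [pow_succ, Nat.mul_div_cancel _ hp.pos]
      rw [e1, e2, e3, Nat.choose_self, one_mul] at key
      have hd1' : p ^ t ∣ n / p := by
        rw [Nat.dvd_div_iff_mul_dvd hpn, mul_comm, ← pow_succ]
        exact h1
      have hd2' : ¬ p ^ (t + 1) ∣ n / p := by
        rw [Nat.dvd_div_iff_mul_dvd hpn, mul_comm, ← pow_succ]
        exact h2
      have := ih (n / p) hd1' hd2'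
      intro hc
      apply this
      rw [Nat.dvd_iff_mod_eq_zero] at hc ⊢
      rw [← key]
      exact hc

/-- If all `p`-th power components `d (p^j)`, `j < m`, of an `f`-derivation vanish at `r`,
then all components `d n`, `1 ≤ n < p^m`, vanish at `r`. -/
theorem f_deriv_vanish_of_p_powers_vanish (p : ℕ) (hp : p.Prime) (m : ℕ) (hm : 0 < m)
    (k : Type*) [Field k] [CharP k p]
    (f : MvPolynomial (Fin 2) k) (hf : IsTruncGroupLaw p m f)
    (R : Type*) [CommRing R] [Algebra k R]
    (d : ℕ → R → R)
    (hd : IsTruncHSDeriv p m d)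
    (hiter : IsFIterativeTrunc p m f d)
    (r : R) (hr : ∀ j, j < m → d (p ^ j) r = 0) :
    ∀ n, 1 ≤ n → n < p ^ m → d n r = 0 := by
  obtain ⟨hfsupp, hfX0, hf0X, -⟩ := hf
  have hc0 : MvPolynomial.coeff (0 : Fin 2 →₀ ℕ) f = 0 := by
    have h := coeff_aeval_X_zero f 0
    rw [hfX0] at h
    simpa using h.symm
  have hce0 : MvPolynomial.coeff (Finsupp.single (0 : Fin 2) 1) f = 1 := by
    have h := coeff_aeval_X_zero f 1
    rw [hfX0] at h
    simpa using h.symm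
  have hce1 : MvPolynomial.coeff (Finsupp.single (1 : Fin 2) 1) f = 1 := by
    have h := coeff_aeval_zero_X f 1
    rw [hf0X] at h
    simpa using h.symm
  have hflow : MyLow 1 f := by
    intro e he
    have : e = 0 := by ext x; fin_cases x <;> simp <;> omega
    subst this
    exact hc0
  intro n
  induction n using Nat.strong_induction_on with
  | _ n IH =>
    intro hn1 hnq
    by_cases hpow : ∃ t, n = p ^ t
    · obtain ⟨t, rfl⟩ := hpow
      exact hr t ((Nat.pow_lt_pow_iff_right hp.one_lt).mp hnq)
    · have hn0 : n ≠ 0 := by omega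
      set t := n.factorization p with ht
      have hdvd1 : p ^ t ∣ n := Nat.ordProj_dvd n p
      have hdvd2 : ¬ p ^ (t + 1) ∣ n := Nat.pow_succ_factorization_not_dvd hn0 hp
      set i := p ^ t with hi
      have hipos : 0 < i := pow_pos hp.pos t
      have hlt : i < n :=
        lt_of_le_of_ne (Nat.le_of_dvd (by omega) hdvd1) (fun h => hpow ⟨t, h.symm⟩)
      have htm : t < m := (Nat.pow_lt_pow_iff_right hp.one_lt).mp (lt_trans hlt hnq)
      set j := n - i with hj
      have hijn : i + j = n := by omega
      have hiq : i < p ^ m := lt_trans hlt hnq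
      have hjq : j < p ^ m := by omega
      have hdi : d i r = 0 := hr t htm
      have key := hiter i j hiq hjq r
      rw [hdi] at key
      have hdj0 : d j 0 = 0 := by
        have h := hd.1 j hjq 0 0
        rw [add_zero] at h
        exact left_eq_add.mp h
      rw [hdj0] at key
      have hsum : (∑ n' ∈ Finset.range (p ^ m),
          MvPolynomial.coeff
            (Finsupp.single (0 : Fin 2) i + Finsupp.single (1 : Fin 2) j) (f ^ n') • d n' r)
          = (n.choose i : k) • d n r := by
        rw [Finset.sum_eq_single_of_mem n (Finset.mem_range.mpr hnq)]
        · rw [coeff_pow_choose f hc0 hce0 hce1 n i j hijn]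
        · intro b hb hbn
          rcases lt_trichotomy b n with hbn' | rfl | hbn'
          · rcases Nat.eq_zero_or_pos b with rfl | hb1
            · rw [pow_zero, MvPolynomial.coeff_one, if_neg, zero_smul]
              intro hcon
              have := congrArg (fun g : Fin 2 →₀ ℕ => g 0) hcon
              simp [Finsupp.single_apply] at this
              omega
            · rw [IH b hbn' hb1 (Finset.mem_range.mp hb), smul_zero]
          · exact absurd rfl hbn
          · have hz : MvPolynomial.coeff
                (Finsupp.single (0 : Fin 2) i + Finsupp.single (1 : Fin 2) j) (f ^ b) = 0 := by
              have hl := myLow_pow hflow b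
              rw [one_mul] at hl
              apply hl
              simp [Finsupp.single_apply]
              omega
            rw [hz, zero_smul]
      rw [hsum] at key
      have hndvd : ¬ p ∣ n.choose i := my_not_dvd_choose p hp t n hdvd1 hdvd2
      have hcne : (n.choose i : k) ≠ 0 := by
        rw [Ne, CharP.cast_eq_zero_iff k p]
        exact hndvd
      have hfin : d n r = ((n.choose i : k)⁻¹ * (n.choose i : k)) • d n r := by
        rw [inv_mul_cancel₀ hcne, one_smul]
      rw [hfin, mul_smul, ← key, smul_zero]
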